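/- Let W ⊂ GL(V) be a finite complex reflection group, with basic invariants f = (f_1,…,f_r) of degrees d_1,…,d_r, and let Δ_f be the discriminant polynomial. For d ∈ N, let J ⊂ {1,…,r} be the set of indices j with d ∤ d_j, and let 𝒥 be the ideal of C[X_1,…,X_r] generated by {X_j : j ∈ J}. Then d is a regular number for W if and only if Δ_f ∉ 𝒥. -/

import Mathlib

open MvPolynomial

/-- A (complex) reflection of `ℂ^r`: a finite order invertible linear map, distinct from
the identity, whose fixed subspace `ker(s - Id)` is a hyperplane. -/
def IsReflection {r : ℕ} (w : (Fin r → ℂ) ≃ₗ[ℂ] (Fin r → ℂ)) : Prop :=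
  IsOfFinOrder w ∧ w ≠ 1 ∧
    Module.finrank ℂ (LinearMap.ker ((w : (Fin r → ℂ) →ₗ[ℂ] (Fin r → ℂ)) - LinearMap.id))
      = r - 1

/-- The fixed subspace `ker(w - Id)` of a linear automorphism of `ℂ^r`. -/
noncomputable def fixedSpace {r : ℕ} (w : (Fin r → ℂ) ≃ₗ[ℂ] (Fin r → ℂ)) :
    Submodule ℂ (Fin r → ℂ) :=
  LinearMap.ker ((w : (Fin r → ℂ) →ₗ[ℂ] (Fin r → ℂ)) - LinearMap.id)


lemma aux_eval_smul {σ : Type*} {n : ℕ} {φ : MvPolynomial σ ℂ}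
    (h : φ.IsHomogeneous n) (c : ℂ) (v : σ → ℂ) :
    eval (c • v) φ = c ^ n * eval v φ := by
  rw [eval_eq, eval_eq, Finset.mul_sum]
  refine Finset.sum_congr rfl fun dd hd => ?_
  have hdeg : dd.degree = n := by
    by_contra hne
    exact (mem_support_iff.mp hd) (h.coeff_eq_zero hne)
  have h1 : ∏ i ∈ dd.support, (c • v) i ^ dd i
      = (∏ i ∈ dd.support, c ^ dd i) * ∏ i ∈ dd.support, v i ^ dd i := by
    rw [← Finset.prod_mul_distrib]
    refine Finset.prod_congr rfl fun i _ => ?_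
    simp [mul_pow]
  rw [h1, Finset.prod_pow_eq_pow_sum]
  have h2 : ∑ i ∈ dd.support, dd i = n := hdeg
  rw [h2]
  ring

noncomputable def auxCompW {r : ℕ} (w : (Fin r → ℂ) ≃ₗ[ℂ] (Fin r → ℂ)) :
    MvPolynomial (Fin r) ℂ →ₐ[ℂ] MvPolynomial (Fin r) ℂ :=
  aeval (fun i => ∑ j, C (w (Pi.single j 1) i) * X j)

lemma aux_eval_aeval' {σ τ : Type*} (g : σ → MvPolynomial τ ℂ) (v : τ → ℂ)
    (p : MvPolynomial σ ℂ) :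
    eval v (aeval g p) = eval (fun i => eval v (g i)) p := by
  rw [aeval_def, eval_eval₂]
  have h : (eval v).comp (algebraMap ℂ (MvPolynomial τ ℂ)) = RingHom.id ℂ := by
    ext a; simp
  rw [h, eval₂_id]

lemma aux_eval_compW {r : ℕ} (w : (Fin r → ℂ) ≃ₗ[ℂ] (Fin r → ℂ))
    (p : MvPolynomial (Fin r) ℂ) (v : Fin r → ℂ) :
    eval v (auxCompW w p) = eval (w v) p := by
  rw [auxCompW, aux_eval_aeval']
  have harg : (fun i => eval v (∑ j, C (w (Pi.single j 1) i) * X j)) = ⇑w v := by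
    funext i
    have := LinearMap.pi_apply_eq_sum_univ (LinearMap.proj i ∘ₗ (w : (Fin r → ℂ) →ₗ[ℂ] (Fin r → ℂ))) v
    simp only [LinearMap.comp_apply, LinearMap.proj_apply] at this
    rw [show (w v) i = _ from this]
    simp only [map_sum, map_mul, eval_C, eval_X]
    refine Finset.sum_congr rfl fun j _ => ?_
    have hsing : (fun k => if j = k then (1:ℂ) else 0) = Pi.single j 1 := by
      funext k; rw [Pi.single_apply]; simp [eq_comm]
    rw [← hsing, smul_eq_mul]
    exact mul_comm _ _
  rw [harg]

lemma aux_compW_one_X {r : ℕ} (i : Fin r) :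
    auxCompW (1 : (Fin r → ℂ) ≃ₗ[ℂ] (Fin r → ℂ)) (X i) = X i := by
  rw [auxCompW, aeval_X]
  rw [Finset.sum_eq_single i]
  · simp
  · intro j _ hj
    have : (Pi.single j (1:ℂ) : Fin r → ℂ) i = 0 := by rw [Pi.single_apply, if_neg (Ne.symm hj)]
    simp [this]
  · simp

lemma aux_interp {r : ℕ} (S : Finset (Fin r → ℂ)) (vals : (Fin r → ℂ) → ℂ) :
    ∃ P : MvPolynomial (Fin r) ℂ, ∀ x ∈ S, eval x P = vals x := by
  classical
  -- elementary factor
  let E : (Fin r → ℂ) → (Fin r → ℂ) → MvPolynomial (Fin r) ℂ := fun p q =>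
    if h : ∃ k, q k ≠ p k then
      C (p h.choose - q h.choose)⁻¹ * (X h.choose - C (q h.choose)) else 1
  have hEp : ∀ p q : Fin r → ℂ, q ≠ p → eval p (E p q) = 1 := by
    intro p q hqp
    have h : ∃ k, q k ≠ p k := Function.ne_iff.mp hqp
    have hk := h.choose_spec
    simp only [E, dif_pos h, map_mul, eval_C, map_sub, eval_X]
    rw [inv_mul_cancel₀ (sub_ne_zero_of_ne (Ne.symm hk))]
  have hEq : ∀ p q : Fin r → ℂ, q ≠ p → eval q (E p q) = 0 := by
    intro p q hqp
    have h : ∃ k, q k ≠ p k := Function.ne_iff.mp hqp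
    simp only [E, dif_pos h, map_mul, eval_C, map_sub, eval_X]
    simp
  let D : (Fin r → ℂ) → MvPolynomial (Fin r) ℂ := fun p => ∏ q ∈ S.erase p, E p q
  have hDp : ∀ p, eval p (D p) = 1 := by
    intro p
    rw [map_prod]
    refine Finset.prod_eq_one fun q hq => hEp p q (Finset.mem_erase.mp hq).1
  have hDq : ∀ p, ∀ q ∈ S, q ≠ p → eval q (D p) = 0 := by
    intro p q hq hqp
    rw [map_prod]
    exact Finset.prod_eq_zero (Finset.mem_erase.mpr ⟨hqp, hq⟩) (hEq p q hqp)
  refine ⟨∑ p ∈ S, C (vals p) * D p, fun x hx => ?_⟩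
  rw [map_sum, Finset.sum_eq_single x]
  · simp [hDp x]
  · intro p hp hpx
    simp [hDq p x hx (Ne.symm hpx)]
  · intro h; exact absurd hx h

lemma aux_prod_mul {G : Type*} [Group G] (W : Subgroup G)
    (hWfin : (W : Set G).Finite) {β : Type*} [CommMonoid β] (u' : G) (hu' : u' ∈ W)
    (F : G → β) :
    ∏ w ∈ hWfin.toFinset, F (w * u') = ∏ w ∈ hWfin.toFinset, F w := by
  refine Finset.prod_bij' (fun w _ => w * u') (fun w _ => w * u'⁻¹) ?_ ?_ ?_ ?_ ?_
  · intro w hw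
    rw [Set.Finite.mem_toFinset] at hw ⊢
    exact W.mul_mem hw hu'
  · intro w hw
    rw [Set.Finite.mem_toFinset] at hw ⊢
    exact W.mul_mem hw (W.inv_mem hu')
  · intro w _; group
  · intro w _; group
  · intro w _; rfl

lemma aux_orbit {r : ℕ} (W : Subgroup ((Fin r → ℂ) ≃ₗ[ℂ] (Fin r → ℂ)))
    (hWfin : (W : Set ((Fin r → ℂ) ≃ₗ[ℂ] (Fin r → ℂ))).Finite)
    (f : Fin r → MvPolynomial (Fin r) ℂ)
    (hf_gen : ∀ P : MvPolynomial (Fin r) ℂ,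
      (∀ w ∈ W, ∀ v : Fin r → ℂ, eval (w v) P = eval v P) ↔
        P ∈ Algebra.adjoin ℂ (Set.range f))
    (u v : Fin r → ℂ) (h : ∀ i, eval u (f i) = eval v (f i)) :
    ∃ w ∈ W, w v = u := by
  classical
  by_contra hcon
  push_neg at hcon
  set WF := hWfin.toFinset with hWFdef
  have hmemWF : ∀ w, w ∈ WF ↔ w ∈ W := fun w => hWfin.mem_toFinset
  have h1WF : (1 : (Fin r → ℂ) ≃ₗ[ℂ] (Fin r → ℂ)) ∈ WF := (hmemWF 1).mpr W.one_mem
  set Ou : Finset (Fin r → ℂ) := WF.image (fun w => w u) with hOu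
  set Ov : Finset (Fin r → ℂ) := WF.image (fun w => w v) with hOv
  have hdisj : ∀ x ∈ Ou, x ∉ Ov := by
    intro x hxu hxv
    obtain ⟨w, hw, rfl⟩ := Finset.mem_image.mp hxu
    obtain ⟨w', hw', hww'⟩ := Finset.mem_image.mp hxv
    have : (w⁻¹ * w') v = u := by
      have : w ((w⁻¹ * w') v) = w u := by
        show w (w⁻¹ (w' v)) = w u
        rw [hww']
        exact LinearEquiv.apply_symm_apply w (w u)
      exact w.injective this
    exact hcon (w⁻¹ * w') (W.mul_mem (W.inv_mem ((hmemWF w).mp hw)) ((hmemWF w').mp hw')) this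
  obtain ⟨P, hP⟩ := aux_interp (Ou ∪ Ov) (fun x => if x ∈ Ov then 1 else 0)
  set Q : MvPolynomial (Fin r) ℂ := ∏ w ∈ WF, auxCompW w P with hQ
  have hQeval : ∀ x : Fin r → ℂ, eval x Q = ∏ w ∈ WF, eval (w x) P := by
    intro x
    rw [hQ, map_prod]
    exact Finset.prod_congr rfl fun w _ => aux_eval_compW w P x
  have hQinv : ∀ w' ∈ W, ∀ x : Fin r → ℂ, eval (w' x) Q = eval x Q := by
    intro w' hw' x
    rw [hQeval, hQeval]
    have : ∀ w : (Fin r → ℂ) ≃ₗ[ℂ] (Fin r → ℂ), eval (w (w' x)) P = eval ((w * w') x) P :=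
      fun w => rfl
    simp_rw [this]
    exact aux_prod_mul W hWfin w' hw' (fun g => eval (g x) P)
  have hQadj : Q ∈ Algebra.adjoin ℂ (Set.range f) := (hf_gen Q).mp hQinv
  rw [Algebra.adjoin_range_eq_range_aeval] at hQadj
  obtain ⟨q, hq⟩ := (AlgHom.mem_range _).mp hQadj
  have hu0 : eval u Q = 0 := by
    rw [hQeval]
    refine Finset.prod_eq_zero h1WF ?_
    have hmem : (1 : (Fin r → ℂ) ≃ₗ[ℂ] (Fin r → ℂ)) u ∈ Ou ∪ Ov :=
      Finset.mem_union_left _ (Finset.mem_image_of_mem _ h1WF)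
    rw [hP _ hmem]
    have : (1 : (Fin r → ℂ) ≃ₗ[ℂ] (Fin r → ℂ)) u ∉ Ov :=
      hdisj _ (Finset.mem_image_of_mem _ h1WF)
    rw [if_neg this]
  have hv1 : eval v Q = 1 := by
    rw [hQeval]
    refine Finset.prod_eq_one fun w hw => ?_
    have hmemv : w v ∈ Ov := Finset.mem_image_of_mem _ hw
    rw [hP _ (Finset.mem_union_right _ hmemv)]
    rw [if_pos hmemv]
  have : eval u Q = eval v Q := by
    rw [← hq, aux_eval_aeval', aux_eval_aeval']
    have harg : (fun i => eval u (f i)) = fun i => eval v (f i) := funext h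
    rw [harg]
  rw [hu0, hv1] at this
  exact zero_ne_one this

lemma aux_integral {r : ℕ} (W : Subgroup ((Fin r → ℂ) ≃ₗ[ℂ] (Fin r → ℂ)))
    (hWfin : (W : Set ((Fin r → ℂ) ≃ₗ[ℂ] (Fin r → ℂ))).Finite)
    (f : Fin r → MvPolynomial (Fin r) ℂ)
    (hf_gen : ∀ P : MvPolynomial (Fin r) ℂ,
      (∀ w ∈ W, ∀ v : Fin r → ℂ, eval (w v) P = eval v P) ↔
        P ∈ Algebra.adjoin ℂ (Set.range f)) :
    ((aeval f : MvPolynomial (Fin r) ℂ →ₐ[ℂ] MvPolynomial (Fin r) ℂ) :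
      MvPolynomial (Fin r) ℂ →+* MvPolynomial (Fin r) ℂ).IsIntegral := by
  classical
  set φ : MvPolynomial (Fin r) ℂ →+* MvPolynomial (Fin r) ℂ :=
    ((aeval f : MvPolynomial (Fin r) ℂ →ₐ[ℂ] MvPolynomial (Fin r) ℂ) :
      MvPolynomial (Fin r) ℂ →+* MvPolynomial (Fin r) ℂ) with hφ
  have hX : ∀ i, φ.IsIntegralElem (X i) := by
    intro i
    set WF := hWfin.toFinset with hWFdef
    set q : Polynomial (MvPolynomial (Fin r) ℂ) :=
      ∏ w ∈ WF, (Polynomial.X - Polynomial.C (auxCompW w (X i))) with hq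
    have hmon : q.Monic :=
      Polynomial.monic_prod_of_monic _ _ fun w _ => Polynomial.monic_X_sub_C _
    have hmap : ∀ x : Fin r → ℂ, q.map (eval x : MvPolynomial (Fin r) ℂ →+* ℂ)
        = ∏ w ∈ WF, (Polynomial.X - Polynomial.C ((w x) i)) := by
      intro x
      rw [hq, Polynomial.map_prod]
      refine Finset.prod_congr rfl fun w _ => ?_
      rw [Polynomial.map_sub, Polynomial.map_X, Polynomial.map_C]
      congr 1
      rw [show ((eval x : MvPolynomial (Fin r) ℂ →+* ℂ) (auxCompW w (X i)))
            = eval x (auxCompW w (X i)) from rfl, aux_eval_compW, eval_X]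
    have hinv : ∀ k : ℕ, ∀ u ∈ W, ∀ x : Fin r → ℂ,
        eval (u x) (q.coeff k) = eval x (q.coeff k) := by
      intro k u hu x
      have h1 : eval (u x) (q.coeff k)
          = (q.map (eval (u x) : MvPolynomial (Fin r) ℂ →+* ℂ)).coeff k :=
        (Polynomial.coeff_map _ _).symm
      have h2 : eval x (q.coeff k)
          = (q.map (eval x : MvPolynomial (Fin r) ℂ →+* ℂ)).coeff k :=
        (Polynomial.coeff_map _ _).symm
      rw [h1, h2, hmap, hmap]
      congr 1
      calc ∏ w ∈ WF, (Polynomial.X - Polynomial.C ((w (u x)) i))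
          = ∏ w ∈ WF, (Polynomial.X - Polynomial.C (((w * u) x) i)) := rfl
        _ = ∏ w ∈ WF, (Polynomial.X - Polynomial.C ((w x) i)) :=
            aux_prod_mul W hWfin u hu (fun g => Polynomial.X - Polynomial.C ((g x) i))
    have hcoeff : ∀ k, q.coeff k ∈ Set.range φ := by
      intro k
      have hmem := (hf_gen (q.coeff k)).mp (fun u hu x => hinv k u hu x)
      rw [Algebra.adjoin_range_eq_range_aeval] at hmem
      obtain ⟨p, hp⟩ := (AlgHom.mem_range _).mp hmem
      exact ⟨p, hp⟩
    have hlift : q ∈ Polynomial.lifts φ := (Polynomial.lifts_iff_coeff_lifts q).mpr hcoeff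
    obtain ⟨q', hq'map, _, hq'mon⟩ := Polynomial.lifts_and_degree_eq_and_monic hlift hmon
    refine ⟨q', hq'mon, ?_⟩
    rw [Polynomial.eval₂_eq_eval_map, hq'map, hq, Polynomial.eval_prod]
    refine Finset.prod_eq_zero ((hWfin.mem_toFinset).mpr W.one_mem) ?_
    rw [Polynomial.eval_sub, Polynomial.eval_X, Polynomial.eval_C, aux_compW_one_X, sub_self]
  intro x
  induction x using MvPolynomial.induction_on with
  | C a =>
    refine ⟨Polynomial.X - Polynomial.C (C a), Polynomial.monic_X_sub_C _, ?_⟩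
    have : φ (C a) = C a := by rw [hφ]; simp
    simp [this]
  | add p q hp hq => exact hp.add φ hq
  | mul_X p i hp => exact hp.mul φ (hX i)

lemma aux_surj {r : ℕ} (W : Subgroup ((Fin r → ℂ) ≃ₗ[ℂ] (Fin r → ℂ)))
    (hWfin : (W : Set ((Fin r → ℂ) ≃ₗ[ℂ] (Fin r → ℂ))).Finite)
    (f : Fin r → MvPolynomial (Fin r) ℂ)
    (hf_alg : AlgebraicIndependent ℂ f)
    (hf_gen : ∀ P : MvPolynomial (Fin r) ℂ,
      (∀ w ∈ W, ∀ v : Fin r → ℂ, eval (w v) P = eval v P) ↔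
        P ∈ Algebra.adjoin ℂ (Set.range f))
    (c : Fin r → ℂ) :
    ∃ v : Fin r → ℂ, ∀ i, eval v (f i) = c i := by
  classical
  set φ : MvPolynomial (Fin r) ℂ →+* MvPolynomial (Fin r) ℂ :=
    ((aeval f : MvPolynomial (Fin r) ℂ →ₐ[ℂ] MvPolynomial (Fin r) ℂ) :
      MvPolynomial (Fin r) ℂ →+* MvPolynomial (Fin r) ℂ) with hφ
  letI alg : Algebra (MvPolynomial (Fin r) ℂ) (MvPolynomial (Fin r) ℂ) := φ.toAlgebra
  haveI hint : Algebra.IsIntegral (MvPolynomial (Fin r) ℂ) (MvPolynomial (Fin r) ℂ) :=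
    Algebra.isIntegral_def.mpr (aux_integral W hWfin f hf_gen)
  set P : Ideal (MvPolynomial (Fin r) ℂ) :=
    RingHom.ker (eval c : MvPolynomial (Fin r) ℂ →+* ℂ) with hP
  haveI hmax : P.IsMaximal :=
    RingHom.ker_isMaximal_of_surjective (eval c) (fun a => ⟨C a, eval_C _⟩)
  have hker : RingHom.ker (algebraMap (MvPolynomial (Fin r) ℂ) (MvPolynomial (Fin r) ℂ)) ≤ P := by
    intro x hx
    have hx0 : φ x = 0 := hx
    have : (aeval (R := ℂ) f) x = (aeval (R := ℂ) f) 0 := by rw [map_zero]; exact hx0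
    have hx' : x = 0 := hf_alg this
    rw [hx']
    exact P.zero_mem
  obtain ⟨Q, hQmax, hQcomap⟩ :=
    Ideal.exists_ideal_over_maximal_of_isIntegral (R := MvPolynomial (Fin r) ℂ)
      (S := MvPolynomial (Fin r) ℂ) P hker
  have hQrad : Q.radical = Q := hQmax.isPrime.radical
  have hnonempty : (MvPolynomial.zeroLocus ℂ Q).Nonempty := by
    by_contra hemp
    rw [Set.not_nonempty_iff_eq_empty] at hemp
    have hh := MvPolynomial.vanishingIdeal_zeroLocus_eq_radical (K := ℂ) Q
    rw [hemp, MvPolynomial.vanishingIdeal_empty, hQrad] at hh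
    exact hQmax.ne_top hh.symm
  obtain ⟨v, hv⟩ := hnonempty
  refine ⟨v, fun i => ?_⟩
  have hXi : X i - C (c i) ∈ P := by
    rw [hP, RingHom.mem_ker, map_sub, eval_X, eval_C, sub_self]
  have hQ : φ (X i - C (c i)) ∈ Q := by
    rw [← hQcomap] at hXi
    exact hXi
  have hφi : φ (X i - C (c i)) = f i - C (c i) := by
    rw [hφ]
    simp only [RingHom.coe_coe, map_sub, aeval_X]
    congr 1
    simp [algebraMap_eq]
  rw [hφi] at hQ
  have := (MvPolynomial.mem_zeroLocus_iff).mp hv _ hQ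
  rw [map_sub, aeval_C, sub_eq_zero] at this
  simpa using this

lemma aux_mem_fixedSpace {r : ℕ} (s : (Fin r → ℂ) ≃ₗ[ℂ] (Fin r → ℂ)) (v : Fin r → ℂ) :
    v ∈ fixedSpace s ↔ s v = v := by
  rw [fixedSpace, LinearMap.mem_ker, LinearMap.sub_apply, LinearMap.id_apply, sub_eq_zero]
  simp

lemma aux_prim_root (d : ℕ) : ∃ ζ : ℂ, IsPrimitiveRoot ζ d := by
  rcases eq_or_ne d 0 with rfl | hd
  · refine ⟨2, ?_, ?_⟩
    · norm_num
    · intro l hl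
      rw [zero_dvd_iff]
      by_contra hl0
      have h2 : ((2:ℂ))^l = ((2^l : ℕ) : ℂ) := by push_cast; ring
      rw [h2, show (1:ℂ) = ((1:ℕ):ℂ) by norm_num] at hl
      have h3 : (2:ℕ)^l = 1 := Nat.cast_inj.mp hl
      have h4 : 1 < 2^l := Nat.one_lt_two_pow_iff.mpr hl0
      omega
  · exact ⟨_, Complex.isPrimitiveRoot_exp d hd⟩

/-- `d` is a regular number for `W` iff some `w ∈ W` has an eigenvector, for a root of
unity `ζ` of order `d`, which lies on no reflecting hyperplane (is fixed by no
reflection of `W`). -/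
def IsRegularNumber {r : ℕ} (W : Subgroup ((Fin r → ℂ) ≃ₗ[ℂ] (Fin r → ℂ))) (d : ℕ) :
    Prop :=
  ∃ ζ : ℂ, IsPrimitiveRoot ζ d ∧ ∃ w, w ∈ W ∧ ∃ v : Fin r → ℂ,
    (∀ s, s ∈ W → IsReflection s → s v ≠ v) ∧ w v = ζ • v

/-- Let `W ⊂ GL(ℂ^r)` be a finite complex reflection group with basic
invariants `f` of degrees `deg i`, and discriminant polynomial `Δ_f` (the polynomial
with `Φ_f(Δ_f) = ∏_{H ∈ A} l_H ^ e_H`). For `d ∈ ℕ`, let `𝒥` be the ideal of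
`ℂ[X_1,…,X_r]` generated by the variables `X j` with `d ∤ deg j`. Then `d` is a regular
number for `W` if and only if `Δ_f ∉ 𝒥`. -/
theorem regular_number_iff_discriminant_not_in_ideal
    (r : ℕ) (W : Subgroup ((Fin r → ℂ) ≃ₗ[ℂ] (Fin r → ℂ)))
    (hWfin : (W : Set ((Fin r → ℂ) ≃ₗ[ℂ] (Fin r → ℂ))).Finite)
    (hWrefl : Subgroup.closure {w | w ∈ W ∧ IsReflection w} = W)
    (deg : Fin r → ℕ) (f : Fin r → MvPolynomial (Fin r) ℂ)
    (hf_hom : ∀ i, (f i).IsHomogeneous (deg i))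
    (hf_alg : AlgebraicIndependent ℂ f)
    (hf_gen : ∀ P : MvPolynomial (Fin r) ℂ,
      (∀ w ∈ W, ∀ v : Fin r → ℂ, eval (w v) P = eval v P) ↔
        P ∈ Algebra.adjoin ℂ (Set.range f))
    (A : Finset (Submodule ℂ (Fin r → ℂ)))
    (hA : ∀ H, H ∈ A ↔ ∃ w, w ∈ W ∧ IsReflection w ∧ fixedSpace w = H)
    (l : Submodule ℂ (Fin r → ℂ) → MvPolynomial (Fin r) ℂ)
    (hl : ∀ H ∈ A, (l H).IsHomogeneous 1 ∧ ∀ v : Fin r → ℂ, (eval v (l H) = 0 ↔ v ∈ H))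
    (e : Submodule ℂ (Fin r → ℂ) → ℕ)
    (he : ∀ H ∈ A, e H = Set.ncard {w | w ∈ W ∧ ∀ v ∈ H, w v = v})
    (Δ : MvPolynomial (Fin r) ℂ)
    (hΔ : aeval f Δ = ∏ H ∈ A, l H ^ e H)
    (d : ℕ) :
    IsRegularNumber W d ↔
      Δ ∉ Ideal.span ((fun j => (X j : MvPolynomial (Fin r) ℂ)) '' {j | ¬ d ∣ deg j}) := by
  classical
  set κ : MvPolynomial (Fin r) ℂ →ₐ[ℂ] MvPolynomial (Fin r) ℂ :=
    aeval (fun i => if d ∣ deg i then (X i : MvPolynomial (Fin r) ℂ) else 0) with hκdef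
  set 𝒥 : Ideal (MvPolynomial (Fin r) ℂ) :=
    Ideal.span ((fun j => (X j : MvPolynomial (Fin r) ℂ)) '' {j | ¬ d ∣ deg j}) with h𝒥
  have hκX : ∀ i, κ (X i) = if d ∣ deg i then (X i : MvPolynomial (Fin r) ℂ) else 0 := fun i => by
    rw [hκdef, aeval_X]
  have hspan : ∀ p : MvPolynomial (Fin r) ℂ, p ∈ 𝒥 ↔ κ p = 0 := by
    intro p
    constructor
    · intro hp
      have hle : 𝒥 ≤ RingHom.ker (κ : MvPolynomial (Fin r) ℂ →+* MvPolynomial (Fin r) ℂ) := by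
        rw [h𝒥, Ideal.span_le]
        rintro _ ⟨j, hj, rfl⟩
        rw [SetLike.mem_coe, RingHom.mem_ker]
        show κ (X j) = 0
        rw [hκX j, if_neg hj]
      exact hle hp
    · intro h0
      have key : ∀ q : MvPolynomial (Fin r) ℂ, q - κ q ∈ 𝒥 := by
        intro q
        induction q using MvPolynomial.induction_on with
        | C a =>
          have hCa : κ (C a) = C a := by rw [hκdef]; simp
          rw [hCa, sub_self]; exact 𝒥.zero_mem
        | add p' q' hp' hq' =>
          have hsplit : p' + q' - κ (p' + q') = (p' - κ p') + (q' - κ q') := by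
            rw [map_add]; ring
          rw [hsplit]; exact 𝒥.add_mem hp' hq'
        | mul_X p' i hp' =>
          rw [map_mul, hκX i]
          by_cases hdi : d ∣ deg i
          · rw [if_pos hdi]
            have hsplit : p' * X i - κ p' * X i = (p' - κ p') * X i := by ring
            rw [hsplit]
            exact Ideal.mul_mem_right _ _ hp'
          · rw [if_neg hdi, mul_zero, sub_zero]
            refine Ideal.mul_mem_left _ _ ?_
            rw [h𝒥]
            exact Ideal.subset_span ⟨i, hdi, rfl⟩
      have hkey := key p
      rwa [h0, sub_zero] at hkey
  have heH : ∀ H ∈ A, e H ≠ 0 := by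
    intro H hH
    rw [he H hH]
    have hfin : {w | w ∈ W ∧ ∀ v ∈ H, w v = v}.Finite :=
      hWfin.subset fun x hx => hx.1
    have hne : {w | w ∈ W ∧ ∀ v ∈ H, w v = v}.Nonempty :=
      ⟨1, W.one_mem, fun v _ => rfl⟩
    exact ((Set.ncard_pos hfin).mpr hne).ne'
  have hreg_of : ∀ v : Fin r → ℂ, eval v (aeval f Δ) ≠ 0 →
      ∀ s, s ∈ W → IsReflection s → s v ≠ v := by
    intro v hv s hsW hsrefl hsv
    apply hv
    have hH : fixedSpace s ∈ A := (hA _).mpr ⟨s, hsW, hsrefl, rfl⟩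
    have hvH : v ∈ fixedSpace s := (aux_mem_fixedSpace s v).mpr hsv
    have hl0 : eval v (l (fixedSpace s)) = 0 := ((hl _ hH).2 v).mpr hvH
    rw [hΔ, map_prod]
    refine Finset.prod_eq_zero hH ?_
    rw [map_pow, hl0, zero_pow (heH _ hH)]
  have hne_of : ∀ v : Fin r → ℂ, (∀ s, s ∈ W → IsReflection s → s v ≠ v) →
      eval v (aeval f Δ) ≠ 0 := by
    intro v hreg
    rw [hΔ, map_prod, Finset.prod_ne_zero_iff]
    intro H hH
    rw [map_pow]
    apply pow_ne_zero
    intro hl0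
    obtain ⟨s, hsW, hsrefl, hsfix⟩ := (hA H).mp hH
    have hvH : v ∈ H := ((hl H hH).2 v).mp hl0
    rw [← hsfix] at hvH
    exact hreg s hsW hsrefl ((aux_mem_fixedSpace s v).mp hvH)
  constructor
  · rintro ⟨ζ, hζ, w, hwW, v, hvreg, hwv⟩ hmem
    have hfj0 : ∀ j, ¬ d ∣ deg j → eval v (f j) = 0 := by
      intro j hj
      have hinvj := (hf_gen (f j)).mpr (Algebra.subset_adjoin (Set.mem_range_self j)) w hwW v
      rw [hwv, aux_eval_smul (hf_hom j)] at hinvj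
      by_contra hne
      exact hj ((hζ.pow_eq_one_iff_dvd _).mp
        (mul_right_cancel₀ hne (by rw [hinvj, one_mul])))
    have h0 : eval (fun i => eval v (f i)) Δ = 0 := by
      have hle : 𝒥 ≤ RingHom.ker (eval (fun i => eval v (f i)) :
          MvPolynomial (Fin r) ℂ →+* ℂ) := by
        rw [h𝒥, Ideal.span_le]
        rintro _ ⟨j, hj, rfl⟩
        rw [SetLike.mem_coe, RingHom.mem_ker]
        show eval _ (X j) = 0
        rw [eval_X]
        exact hfj0 j hj
      exact hle hmem
    have hfinal := hne_of v hvreg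
    rw [aux_eval_aeval'] at hfinal
    exact hfinal h0
  · intro hmem
    have hκΔ : κ Δ ≠ 0 := fun h => hmem ((hspan Δ).mpr h)
    obtain ⟨y, hy⟩ : ∃ y : Fin r → ℂ, eval y (κ Δ) ≠ 0 := by
      by_contra hAll
      push_neg at hAll
      exact hκΔ (MvPolynomial.funext fun x => by rw [hAll x, map_zero])
    set c : Fin r → ℂ := fun i => if d ∣ deg i then y i else 0 with hc
    have hyc : eval y (κ Δ) = eval c Δ := by
      rw [hκdef]
      show eval y (aeval (fun i => if d ∣ deg i then (X i : MvPolynomial (Fin r) ℂ) else 0) Δ)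
        = eval c Δ
      rw [aux_eval_aeval']
      have harg : (fun i => eval y
          (if d ∣ deg i then (X i : MvPolynomial (Fin r) ℂ) else 0)) = c := by
        funext i
        by_cases hdi : d ∣ deg i <;> simp [hc, hdi]
      rw [harg]
    obtain ⟨v, hv⟩ := aux_surj W hWfin f hf_alg hf_gen c
    have hΔv : eval v (aeval f Δ) ≠ 0 := by
      rw [aux_eval_aeval']
      have harg : (fun i => eval v (f i)) = c := funext hv
      rw [harg, ← hyc]
      exact hy
    have hvreg := hreg_of v hΔv
    obtain ⟨ζ, hζ⟩ := aux_prim_root d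
    have hfeq : ∀ i, eval (ζ • v) (f i) = eval v (f i) := by
      intro i
      rw [aux_eval_smul (hf_hom i)]
      by_cases hdi : d ∣ deg i
      · rw [(hζ.pow_eq_one_iff_dvd _).mpr hdi, one_mul]
      · rw [hv i, hc]
        simp [hdi]
    obtain ⟨w, hwW, hwv⟩ := aux_orbit W hWfin f hf_gen (ζ • v) v hfeq
    exact ⟨ζ, hζ, w, hwW, v, hvreg, hwv⟩
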